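/- In a ring with D, U satisfying DU − UD = 1, Σ_{k=0}^{n} C(n,k) D^k U^n D^{n−k} = Σ_{k=0}^{n} (−1)^k C(n,k) (n!/k!) Π_{j=0}^{k−1} (−x + 2j + 1), where x := DU + UD = 2UD + 1. -/

import Mathlib

open Finset

section aux
variable {A : Type*} [Ring A] {D U : A}

lemma cast_mul_comm (c : ℕ) (a : A) : a * (c : A) = (c : A) * a := ((Nat.cast_commute c a).symm).eq

lemma cast_mul_comm' (c : ℕ) (a : A) : a * ((c : A) + 1) = ((c : A) + 1) * a := by
  rw [mul_add, add_mul, mul_one, one_mul, cast_mul_comm]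

lemma aux1 (h : D * U = U * D + 1) : ∀ m : ℕ, D * U ^ (m + 1) = U ^ (m + 1) * D + ((m : A) + 1) * U ^ m
  | 0 => by simpa using h
  | (m + 1) => by
    calc D * U ^ (m + 1 + 1) = (D * U ^ (m + 1)) * U := by rw [pow_succ, mul_assoc]
    _ = (U ^ (m + 1) * D + ((m : A) + 1) * U ^ m) * U := by rw [aux1 h m]
    _ = U ^ (m + 1) * (U * D + 1) + ((m : A) + 1) * U ^ (m + 1) := by
        rw [add_mul, mul_assoc, h, mul_assoc, ← pow_succ]
    _ = U ^ (m + 1 + 1) * D + (((m : A) + 1) + 1) * U ^ (m + 1) := by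
        rw [mul_add, mul_one, ← mul_assoc, ← pow_succ, add_assoc, add_comm (U ^ (m + 1)),
          ← add_assoc, add_assoc]
        rw [add_mul, add_mul, one_mul, add_assoc, add_mul, one_mul]
    _ = U ^ (m + 1 + 1) * D + (((m + 1 : ℕ) : A) + 1) * U ^ (m + 1) := by norm_cast

lemma aux2 (h : D * U = U * D + 1) : ∀ k : ℕ, D ^ (k + 1) * U = U * D ^ (k + 1) + ((k : A) + 1) * D ^ k
  | 0 => by simpa using h
  | (k + 1) => by
    calc D ^ (k + 1 + 1) * U = D * (D ^ (k + 1) * U) := by rw [pow_succ', mul_assoc]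
    _ = D * (U * D ^ (k + 1)) + D * (((k : A) + 1) * D ^ k) := by rw [aux2 h k, mul_add]
    _ = (U * D + 1) * D ^ (k + 1) + ((k : A) + 1) * D ^ (k + 1) := by
        rw [← mul_assoc, h, ← mul_assoc D, cast_mul_comm', mul_assoc, ← pow_succ']
    _ = U * D ^ (k + 1 + 1) + (((k : A) + 1) + 1) * D ^ (k + 1) := by
        rw [add_mul, one_mul, mul_assoc, ← pow_succ', add_assoc, add_comm (D ^ (k + 1)),
          ← add_assoc, add_assoc]
        rw [add_mul, add_mul, one_mul, add_assoc, add_mul, one_mul]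
    _ = U * D ^ (k + 1 + 1) + (((k + 1 : ℕ) : A) + 1) * D ^ (k + 1) := by norm_cast

-- general versions with truncated subtraction
lemma aux1' (h : D * U = U * D + 1) (m : ℕ) :
    D * U ^ m = U ^ m * D + (m : A) * U ^ (m - 1) := by
  cases m with
  | zero => simp
  | succ m => simpa using aux1 h m

lemma aux2' (h : D * U = U * D + 1) (k : ℕ) :
    D ^ k * U = U * D ^ k + (k : A) * D ^ (k - 1) := by
  cases k with
  | zero => simp
  | succ k => simpa using aux2 h k

end aux

section main
variable {A : Type*} [Ring A] {D U : A}

lemma aux1s (h : D * U = U * D + 1) (m : ℕ) :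
    D * U ^ m = U ^ m * D + m • U ^ (m - 1) := by
  rw [nsmul_eq_mul]; exact aux1' h m

lemma aux2s (h : D * U = U * D + 1) (k : ℕ) :
    D ^ k * U = U * D ^ k + k • D ^ (k - 1) := by
  rw [nsmul_eq_mul]; exact aux2' h k

lemma expand (h : D * U = U * D + 1) (n : ℕ) : ∀ k : ℕ, D ^ k * U ^ n =
    ∑ i ∈ range (k + 1),
      (k.choose i * n.descFactorial i) • (U ^ (n - i) * D ^ (k - i))
  | 0 => by simp
  | (k + 1) => by
    have step : ∀ i ∈ range (k + 1),
        D * ((k.choose i * n.descFactorial i) • (U ^ (n - i) * D ^ (k - i))) =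
          (k.choose i * n.descFactorial i) • (U ^ (n - i) * D ^ (k + 1 - i)) +
          (k.choose i * n.descFactorial (i + 1)) • (U ^ (n - (i + 1)) * D ^ (k + 1 - (i + 1))) := by
      intro i hi
      have hik : i ≤ k := Nat.lt_succ_iff.mp (mem_range.mp hi)
      have h1 : k - i + 1 = k + 1 - i := by omega
      have h3 : k - i = k + 1 - (i + 1) := by omega
      rw [mul_smul_comm, ← mul_assoc, aux1s h, add_mul, smul_mul_assoc, smul_add, mul_assoc,
        ← pow_succ', h1, smul_smul, Nat.sub_sub, ← h3]
      congr 2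
      rw [Nat.descFactorial_succ]
      ring
    calc D ^ (k + 1) * U ^ n = D * (D ^ k * U ^ n) := by rw [pow_succ', mul_assoc]
    _ = ∑ i ∈ range (k + 1),
          D * ((k.choose i * n.descFactorial i) • (U ^ (n - i) * D ^ (k - i))) := by
        rw [expand h n k, Finset.mul_sum]
    _ = (∑ i ∈ range (k + 1),
          (k.choose i * n.descFactorial i) • (U ^ (n - i) * D ^ (k + 1 - i))) +
        ∑ i ∈ range (k + 1),
          (k.choose i * n.descFactorial (i + 1)) • (U ^ (n - (i + 1)) * D ^ (k + 1 - (i + 1))) := by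
        rw [← Finset.sum_add_distrib]
        exact Finset.sum_congr rfl step
    _ = ∑ i ∈ range (k + 1 + 1),
          ((k + 1).choose i * n.descFactorial i) • (U ^ (n - i) * D ^ (k + 1 - i)) := by
        rw [Finset.sum_range_succ' (fun i => ((k + 1).choose i * n.descFactorial i) •
          (U ^ (n - i) * D ^ (k + 1 - i))) (k + 1)]
        have hgtop : (k.choose (k + 1) * n.descFactorial (k + 1)) •
            (U ^ (n - (k + 1)) * D ^ (k + 1 - (k + 1))) = 0 := by
          simp [Nat.choose_succ_self]
        have hs1 : (∑ i ∈ range (k + 1),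
              (k.choose i * n.descFactorial i) • (U ^ (n - i) * D ^ (k + 1 - i)))
            = (∑ i ∈ range (k + 1), (k.choose (i + 1) * n.descFactorial (i + 1)) •
                (U ^ (n - (i + 1)) * D ^ (k + 1 - (i + 1)))) + U ^ n * D ^ (k + 1) := by
          rw [Finset.sum_range_succ' (fun i => (k.choose i * n.descFactorial i) •
              (U ^ (n - i) * D ^ (k + 1 - i))) k,
            Finset.sum_range_succ (fun i => (k.choose (i + 1) * n.descFactorial (i + 1)) •
              (U ^ (n - (i + 1)) * D ^ (k + 1 - (i + 1)))) k,
            hgtop, add_zero]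
          simp
        rw [hs1]
        have hsp : ∑ i ∈ range (k + 1), ((k + 1).choose (i + 1) * n.descFactorial (i + 1)) •
              (U ^ (n - (i + 1)) * D ^ (k + 1 - (i + 1)))
            = (∑ i ∈ range (k + 1), (k.choose i * n.descFactorial (i + 1)) •
                (U ^ (n - (i + 1)) * D ^ (k + 1 - (i + 1)))) +
              ∑ i ∈ range (k + 1), (k.choose (i + 1) * n.descFactorial (i + 1)) •
                (U ^ (n - (i + 1)) * D ^ (k + 1 - (i + 1))) := by
          rw [← Finset.sum_add_distrib]
          refine Finset.sum_congr rfl fun i _ => ?_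
          rw [Nat.choose_succ_succ, add_mul, add_smul]
        rw [hsp]
        simp only [Nat.choose_zero_right, Nat.descFactorial_zero, one_mul, one_smul,
          Nat.sub_zero]
        abel

end main

section prodsec
variable {A : Type*} [Ring A] {D U : A}

lemma keylem (h : D * U = U * D + 1) (k : ℕ) :
    U ^ k * D ^ k * (U * D - (k : A)) = U ^ (k + 1) * D ^ (k + 1) := by
  have h4 : k • (U ^ k * (D ^ (k - 1) * D)) = k • (U ^ k * D ^ k) := by
    cases k with
    | zero => simp
    | succ k => rw [Nat.add_sub_cancel, ← pow_succ]
  rw [mul_sub, mul_assoc (U ^ k) (D ^ k), ← mul_assoc (D ^ k) U D, ← mul_assoc (U ^ k),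
    aux2s h k, mul_add (U ^ k), add_mul, cast_mul_comm, ← nsmul_eq_mul, mul_smul_comm,
    smul_mul_assoc, mul_assoc (U ^ k) (D ^ (k - 1)) D, h4,
    ← mul_assoc (U ^ k) U (D ^ k), ← pow_succ, mul_assoc (U ^ (k + 1)) (D ^ k) D, ← pow_succ]
  abel

lemma prodLem (h : D * U = U * D + 1) : ∀ k : ℕ,
    ((List.range k).map (fun j : ℕ => -(D * U + U * D) + 2 * (j : A) + 1)).prod
      = ((-2 : ℤ) ^ k) • (U ^ k * D ^ k)
  | 0 => by simp
  | (k + 1) => by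
    rw [List.range_succ, List.map_append, List.prod_append, prodLem h k]
    simp only [List.map_cons, List.map_nil, List.prod_cons, List.prod_nil, mul_one]
    have hf : -(D * U + U * D) + 2 * (k : A) + 1 = (-2 : ℤ) • (U * D - (k : A)) := by
      rw [h, zsmul_eq_mul]
      push_cast
      noncomm_ring
    rw [hf, mul_smul_comm, smul_mul_assoc, smul_smul, ← pow_succ', keylem h k]

end prodsec


lemma natid (n i : ℕ) (hin : i ≤ n) :
    ∑ k ∈ range (n + 1), n.choose k * k.choose i = 2 ^ (n - i) * n.choose i := by
  rw [range_eq_Ico, ← Finset.sum_Ico_consecutive _ (Nat.zero_le i)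
    (by omega : i ≤ n + 1)]
  have hz : ∑ k ∈ Finset.Ico 0 i, n.choose k * k.choose i = 0 := by
    apply Finset.sum_eq_zero
    intro k hk
    rw [Nat.choose_eq_zero_of_lt (Finset.mem_Ico.mp hk).2, mul_zero]
  rw [hz, zero_add, Finset.sum_Ico_eq_sum_range]
  have he : n + 1 - i = n - i + 1 := by omega
  rw [he]
  have ht : ∀ m ∈ range (n - i + 1),
      n.choose (i + m) * (i + m).choose i = n.choose i * (n - i).choose m := by
    intro m hm
    have hm' : m ≤ n - i := Nat.lt_succ_iff.mp (mem_range.mp hm)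
    rw [Nat.choose_mul (by omega : i ≤ i + m),
      Nat.add_sub_cancel_left]
  rw [Finset.sum_congr rfl ht, ← Finset.mul_sum, Nat.sum_range_choose, mul_comm]

open Finset in
theorem stmt_18 {A : Type*} [Ring A] [Algebra ℚ A] (D U : A) (h : D * U - U * D = 1) (n : ℕ) :
    ∑ k ∈ range (n + 1), (n.choose k : A) * (D ^ k * U ^ n * D ^ (n - k)) =
    ∑ k ∈ range (n + 1),
      algebraMap ℚ A ((-1 : ℚ) ^ k * (n.choose k : ℚ) * ((n.factorial : ℚ) / (k.factorial : ℚ))) *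
        ((List.range k).map (fun j : ℕ => -(D * U + U * D) + 2 * (j : A) + 1)).prod := by
  have h' : D * U = U * D + 1 := by rw [eq_add_of_sub_eq h, add_comm]
  -- LHS computation
  have lhs1 : ∀ k ∈ range (n + 1), (n.choose k : A) * (D ^ k * U ^ n * D ^ (n - k)) =
      ∑ i ∈ range (n + 1),
        (n.choose k * (k.choose i * n.descFactorial i)) • (U ^ (n - i) * D ^ (n - i)) := by
    intro k hk
    have hkn : k ≤ n := Nat.lt_succ_iff.mp (mem_range.mp hk)
    rw [expand h' n k, Finset.sum_mul, Finset.mul_sum]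
    have t1 : ∀ i ∈ range (k + 1),
        (n.choose k : A) * ((k.choose i * n.descFactorial i) •
            (U ^ (n - i) * D ^ (k - i)) * D ^ (n - k)) =
        (n.choose k * (k.choose i * n.descFactorial i)) • (U ^ (n - i) * D ^ (n - i)) := by
      intro i hi
      have hik : i ≤ k := Nat.lt_succ_iff.mp (mem_range.mp hi)
      have he : k - i + (n - k) = n - i := by omega
      rw [smul_mul_assoc, ← nsmul_eq_mul, smul_smul, mul_assoc, ← pow_add, he]
    rw [Finset.sum_congr rfl t1]
    apply Finset.sum_subset (by intro x hx; rw [mem_range] at *; omega)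
    intro i _ hi
    rw [mem_range, not_lt] at hi
    rw [Nat.choose_eq_zero_of_lt (show k < i by omega), zero_mul, mul_zero, zero_smul]
  rw [Finset.sum_congr rfl lhs1, Finset.sum_comm]
  have lhs2 : ∀ i ∈ range (n + 1),
      (∑ k ∈ range (n + 1),
        (n.choose k * (k.choose i * n.descFactorial i)) • (U ^ (n - i) * D ^ (n - i))) =
      algebraMap ℚ A ((2 ^ (n - i) * n.choose i * n.descFactorial i : ℕ) : ℚ) *
        (U ^ (n - i) * D ^ (n - i)) := by
    intro i hi
    have hin : i ≤ n := Nat.lt_succ_iff.mp (mem_range.mp hi)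
    rw [← Finset.sum_smul]
    have : (∑ k ∈ range (n + 1), n.choose k * (k.choose i * n.descFactorial i))
        = 2 ^ (n - i) * n.choose i * n.descFactorial i := by
      rw [Finset.sum_congr rfl fun k _ =>
        (mul_assoc (n.choose k) (k.choose i) (n.descFactorial i)).symm,
        ← Finset.sum_mul, natid n i hin]
    rw [this, map_natCast, nsmul_eq_mul]
  rw [Finset.sum_congr rfl lhs2]
  -- RHS computation
  have rhs1 : ∀ k ∈ range (n + 1),
      algebraMap ℚ A ((-1 : ℚ) ^ k * (n.choose k : ℚ) * ((n.factorial : ℚ) / (k.factorial : ℚ))) *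
        ((List.range k).map (fun j : ℕ => -(D * U + U * D) + 2 * (j : A) + 1)).prod =
      algebraMap ℚ A ((-1 : ℚ) ^ k * (n.choose k : ℚ) * ((n.factorial : ℚ) / (k.factorial : ℚ)) *
          (-2 : ℚ) ^ k) * (U ^ k * D ^ k) := by
    intro k _
    rw [prodLem h' k, zsmul_eq_mul, ← mul_assoc,
      show (((-2) ^ k : ℤ) : A) = algebraMap ℚ A (((-2) ^ k : ℤ) : ℚ) from
        (map_intCast _ _).symm, ← map_mul]
    congr 2
    push_cast
    ring
  rw [Finset.sum_congr rfl rhs1]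
  -- reflect the LHS sum
  rw [← Finset.sum_range_reflect]
  refine Finset.sum_congr rfl fun j hj => ?_
  have hjn : j ≤ n := Nat.lt_succ_iff.mp (mem_range.mp hj)
  have e1 : n - (n + 1 - 1 - j) = j := by omega
  have e2 : n + 1 - 1 - j = n - j := by omega
  rw [e2]
  have e3 : n - (n - j) = j := by omega
  rw [e3]
  congr 1
  -- coefficient identity in ℚ
  have hd : (j.factorial : ℚ) * (n.descFactorial (n - j) : ℚ) = n.factorial := by
    have := Nat.factorial_mul_descFactorial (Nat.sub_le n j)
    rw [e3] at this
    exact_mod_cast this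
  congr 1
  rw [Nat.choose_symm hjn]
  have hfac : (n.descFactorial (n - j) : ℚ) = (n.factorial : ℚ) / (j.factorial : ℚ) := by
    rw [eq_div_iff (by exact_mod_cast j.factorial_ne_zero), mul_comm]
    exact hd
  push_cast
  rw [hfac]
  have hm : ((-1 : ℚ)) ^ j * (-2 : ℚ) ^ j = 2 ^ j := by
    rw [← mul_pow]; norm_num
  set c := (n.choose j : ℚ)
  set f := (n.factorial : ℚ) / (j.factorial : ℚ)
  linear_combination (-(c * f)) * hm
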